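/- It is impossible for three binary improper ℤ₂-lattices ℓ₁, ℓ₂, ℓ₃ to satisfy ℓ₁ ⊥ ℓ₂ ≅ ℓ₁ ⊥ ℓ₃ ≅ ℓ₂ ⊥ ℓ₃ ≅ 𝔸 ⊥ 2𝔸 simultaneously. -/

import Mathlib

open Matrix

/-- Isometry of `ℤ₂`-lattices given by Gram matrices indexed by the same type. -/
def IsomGram {ι : Type*} [Fintype ι] [DecidableEq ι]
    (M N : Matrix ι ι ℤ_[2]) : Prop :=
  ∃ T : Matrix ι ι ℤ_[2], IsUnit T.det ∧ Tᵀ * M * T = N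

/-- A binary `ℤ₂`-lattice is improper (modular) if it is isometric to `2^a ℍ` or `2^a 𝔸`. -/
noncomputable def Improper (ℓ : Matrix (Fin 2) (Fin 2) ℤ_[2]) : Prop :=
  ∃ a : ℕ, IsomGram ((2 ^ a : ℤ_[2]) • !![0, 1; 1, 0]) ℓ ∨
    IsomGram ((2 ^ a : ℤ_[2]) • !![2, 1; 1, 2]) ℓ

/-- The Gram matrix of `𝔸 ⊥ 2𝔸` over `ℤ₂` (indexed by `Fin 2 ⊕ Fin 2`). -/
noncomputable def A2A : Matrix (Fin 2 ⊕ Fin 2) (Fin 2 ⊕ Fin 2) ℤ_[2] :=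
  Matrix.fromBlocks !![2, 1; 1, 2] 0 0 ((2 : ℤ_[2]) • !![2, 1; 1, 2])

/-- Isometric lattices have the same norm of determinant. -/
lemma IsomGram.norm_det {ι : Type*} [Fintype ι] [DecidableEq ι]
    {M N : Matrix ι ι ℤ_[2]} (h : IsomGram M N) : ‖N.det‖ = ‖M.det‖ := by
  obtain ⟨T, hT, hTN⟩ := h
  have hnT : ‖T.det‖ = 1 := PadicInt.isUnit_iff.mp hT
  have : N.det = T.det * M.det * T.det := by
    rw [← hTN]; simp only [Matrix.det_mul, Matrix.det_transpose]
  rw [this, norm_mul, norm_mul, hnT]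
  ring

lemma norm_three : ‖(3:ℤ_[2])‖ = 1 := by
  have h2 : ¬ ‖((3:ℤ):ℤ_[2])‖ < 1 := by
    rw [PadicInt.norm_int_lt_one_iff_dvd]; norm_num
  have h1 : ‖((3:ℤ):ℤ_[2])‖ ≤ 1 := PadicInt.norm_le_one _
  have : ‖((3:ℤ):ℤ_[2])‖ = 1 := le_antisymm h1 (not_lt.mp h2)
  simpa using this

lemma norm_two : ‖(2:ℤ_[2])‖ = 1/2 := by
  have := @PadicInt.norm_p 2 _
  norm_num at this ⊢
  exact_mod_cast this

/-- The norm of the determinant of an improper binary lattice is `(1/2)^(2a)`. -/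
lemma Improper.norm_det {ℓ : Matrix (Fin 2) (Fin 2) ℤ_[2]} (h : Improper ℓ) :
    ∃ a : ℕ, ‖ℓ.det‖ = (1/2 : ℝ) ^ (2 * a) := by
  obtain ⟨a, h | h⟩ := h <;> refine ⟨a, ?_⟩ <;>
    rw [h.norm_det, Matrix.det_smul]
  · have hd : (!![0, 1; 1, 0] : Matrix (Fin 2) (Fin 2) ℤ_[2]).det = -1 := by
      simp [Matrix.det_fin_two_of]
    rw [hd, norm_mul, norm_pow, norm_pow, norm_two]
    simp only [Fintype.card_fin, norm_neg, norm_one, mul_one, ← pow_mul]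
    ring
  · have hd : (!![2, 1; 1, 2] : Matrix (Fin 2) (Fin 2) ℤ_[2]).det = 3 := by
      simp [Matrix.det_fin_two_of]; ring
    rw [hd, norm_mul, norm_three, norm_pow, norm_pow, norm_two]
    simp only [Fintype.card_fin, norm_neg, norm_one, mul_one, ← pow_mul]
    ring

lemma norm_det_A2A : ‖A2A.det‖ = (1/2 : ℝ) ^ 2 := by
  have hd : A2A.det = 36 := by
    rw [A2A, Matrix.det_fromBlocks_zero₂₁, Matrix.det_smul]
    simp [Matrix.det_fin_two_of]; ring
  have : (36 : ℤ_[2]) = 2 * 2 * (3 * 3) := by norm_num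
  rw [hd, this]
  simp only [norm_mul, norm_two, norm_three]
  norm_num

lemma half_pow_inj {m n : ℕ} (h : ((1:ℝ)/2)^m = (1/2)^n) : m = n := by
  have : (2:ℝ)^m = 2^n := by
    rw [one_div, inv_pow, inv_pow] at h
    exact inv_injective h
  exact pow_right_injective₀ (by norm_num) (by norm_num) this

lemma pair_sum {ℓ ℓ' : Matrix (Fin 2) (Fin 2) ℤ_[2]} {a a' : ℕ}
    (ha : ‖ℓ.det‖ = (1/2 : ℝ) ^ (2 * a)) (ha' : ‖ℓ'.det‖ = (1/2 : ℝ) ^ (2 * a'))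
    (h : IsomGram (Matrix.fromBlocks ℓ 0 0 ℓ') A2A) : 2 * a + 2 * a' = 2 := by
  have := h.norm_det
  rw [norm_det_A2A, Matrix.det_fromBlocks_zero₂₁, norm_mul, ha, ha',
    ← pow_add] at this
  exact (half_pow_inj this.symm)

/-- Three binary improper `ℤ₂`-lattices cannot satisfy
`ℓ₁ ⊥ ℓ₂ ≅ ℓ₁ ⊥ ℓ₃ ≅ ℓ₂ ⊥ ℓ₃ ≅ 𝔸 ⊥ 2𝔸` simultaneously. -/
theorem not_all_pairs_isometric_to_A2A
    (ℓ₁ ℓ₂ ℓ₃ : Matrix (Fin 2) (Fin 2) ℤ_[2])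
    (h1 : Improper ℓ₁) (h2 : Improper ℓ₂) (h3 : Improper ℓ₃) :
    ¬ (IsomGram (Matrix.fromBlocks ℓ₁ 0 0 ℓ₂) A2A ∧
        IsomGram (Matrix.fromBlocks ℓ₁ 0 0 ℓ₃) A2A ∧
        IsomGram (Matrix.fromBlocks ℓ₂ 0 0 ℓ₃) A2A) := by
  rintro ⟨h12, h13, h23⟩
  obtain ⟨a₁, ha₁⟩ := h1.norm_det
  obtain ⟨a₂, ha₂⟩ := h2.norm_det
  obtain ⟨a₃, ha₃⟩ := h3.norm_det
  have e12 := pair_sum ha₁ ha₂ h12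
  have e13 := pair_sum ha₁ ha₃ h13
  have e23 := pair_sum ha₂ ha₃ h23
  omega
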